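/- Let R be a commutative ring, J ⊆ R an ideal, and suppose the reduction map R → R/J is surjective on the level of rings (it always is). Then the induced group homomorphism Sp_{2n}(R) → Sp_{2n}(R/J) on symplectic groups is surjective whenever R is a PID and R/J is a field. -/

import Mathlib

open Matrix

namespace SympLift

variable {l : Type*} [DecidableEq l] [Fintype l]

section Ring
variable {R : Type*} [CommRing R]

lemma mem_iff_blocks {A B C D : Matrix l l R} :
    fromBlocks A B C D ∈ Matrix.symplecticGroup l R ↔
      (B * Aᵀ = A * Bᵀ ∧ A * Dᵀ - B * Cᵀ = 1 ∧ D * Aᵀ - C * Bᵀ = 1 ∧ D * Cᵀ = C * Dᵀ) := by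
  rw [SymplecticGroup.mem_iff, Matrix.J, fromBlocks_transpose, fromBlocks_multiply,
    fromBlocks_multiply, fromBlocks_inj]
  simp only [Matrix.mul_zero, Matrix.mul_one, Matrix.mul_neg, Matrix.zero_mul, Matrix.one_mul, Matrix.neg_mul,
    add_zero, zero_add, ← sub_eq_add_neg]
  constructor
  · rintro ⟨h1, h2, h3, h4⟩
    refine ⟨sub_eq_zero.mp h1, ?_, h3, sub_eq_zero.mp h4⟩
    · rw [← neg_sub (B * Cᵀ) (A * Dᵀ), h2, neg_neg]
  · rintro ⟨h1, h2, h3, h4⟩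
    refine ⟨sub_eq_zero.mpr h1, ?_, h3, sub_eq_zero.mpr h4⟩
    rw [← neg_sub, h2]


lemma u_mem {S : Matrix l l R} (hS : Sᵀ = S) :
    fromBlocks 1 S 0 1 ∈ Matrix.symplecticGroup l R := by
  rw [mem_iff_blocks]
  refine ⟨by simp [hS], by simp, by simp, by simp⟩

lemma uL_mem {T : Matrix l l R} (hT : Tᵀ = T) :
    fromBlocks 1 0 T 1 ∈ Matrix.symplecticGroup l R := by
  rw [mem_iff_blocks]
  refine ⟨by simp, by simp, by simp, by simp [hT]⟩

lemma levi_mem {E F : Matrix l l R} (h1 : E * F = 1) (h2 : F * E = 1) :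
    fromBlocks E 0 0 Fᵀ ∈ Matrix.symplecticGroup l R := by
  rw [mem_iff_blocks]
  refine ⟨by simp, by simp [transpose_transpose, h1], ?_, by simp⟩
  simp [← transpose_mul, h1]

lemma map_transvection {k : Type*} [CommRing k] (f : R →+* k) (i j : l) (c : R) :
    (Matrix.transvection i j c).map f = Matrix.transvection i j (f c) := by
  ext a b
  simp only [Matrix.transvection, Matrix.map_apply, Matrix.add_apply, Matrix.single,
    Matrix.one_apply, Matrix.of_apply]
  split_ifs <;> simp

lemma vecMul_cancel {M N : Matrix l l R} (hMN : M * N = 1) {y : l → R} (hy : y ᵥ* M = 0) :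
    y = 0 := by
  calc y = (y ᵥ* M) ᵥ* N := by rw [Matrix.vecMul_vecMul, hMN, Matrix.vecMul_one]
  _ = 0 := by rw [hy, Matrix.zero_vecMul]

end Ring

section Lift

variable {R k : Type*} [CommRing R] [CommRing k] (f : R →+* k)

/-- A symplectic matrix over `k` is liftable if it is the image of a symplectic matrix over `R`. -/
def Liftable (B : Matrix (l ⊕ l) (l ⊕ l) k) : Prop :=
  ∃ A ∈ Matrix.symplecticGroup l R, A.map f = B

lemma Liftable.mul {B B' : Matrix (l ⊕ l) (l ⊕ l) k} (h : Liftable f B) (h' : Liftable f B') :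
    Liftable f (B * B') := by
  obtain ⟨A, hA, rfl⟩ := h
  obtain ⟨A', hA', rfl⟩ := h'
  exact ⟨A * A', mul_mem hA hA', by rw [Matrix.map_mul]⟩

lemma map_one' : (1 : Matrix l l R).map f = 1 := Matrix.map_one f f.map_zero f.map_one
lemma map_zero' : (0 : Matrix l l R).map f = 0 := Matrix.map_zero f f.map_zero
lemma map_negone' : (-1 : Matrix l l R).map f = -1 := by
  ext i j
  simp only [Matrix.map_apply, Matrix.neg_apply, Matrix.one_apply, map_neg, apply_ite f,
    f.map_zero, f.map_one]

variable (hf : Function.Surjective f)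
include hf

lemma liftable_u {S : Matrix l l k} (hS : Sᵀ = S) : Liftable f (fromBlocks 1 S 0 1) := by
  set s := Function.surjInv hf with hs
  have hmap : (Matrix.of fun i j => s (S i j)).map f = S := by
    ext i j; simp [hs, Function.surjInv_eq hf]
  refine ⟨fromBlocks 1 (Matrix.of fun i j => s (S i j)) 0 1, u_mem ?_, ?_⟩
  · ext i j
    exact congrArg s (congrFun (congrFun hS.symm i) j).symm
  · rw [Matrix.fromBlocks_map, map_one' f, map_zero' f, hmap]

lemma liftable_uL {T : Matrix l l k} (hT : Tᵀ = T) : Liftable f (fromBlocks 1 0 T 1) := by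
  set s := Function.surjInv hf with hs
  have hmap : (Matrix.of fun i j => s (T i j)).map f = T := by
    ext i j; simp [hs, Function.surjInv_eq hf]
  refine ⟨fromBlocks 1 0 (Matrix.of fun i j => s (T i j)) 1, uL_mem ?_, ?_⟩
  · ext i j
    exact congrArg s (congrFun (congrFun hT.symm i) j).symm
  · rw [Matrix.fromBlocks_map, map_one' f, map_zero' f, hmap]

lemma liftable_J : Liftable f (Matrix.J l k) := by
  refine ⟨Matrix.J l R, SymplecticGroup.J_mem l R, ?_⟩
  rw [Matrix.J, Matrix.J, Matrix.fromBlocks_map, map_one' f, map_zero' f, map_negone' f]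

lemma liftable_levi_transvection (t : Matrix.TransvectionStruct l k) :
    Liftable f (fromBlocks t.toMatrix 0 0 t.inv.toMatrixᵀ) := by
  set s := Function.surjInv hf with hs
  set t' : Matrix.TransvectionStruct l R := ⟨t.i, t.j, t.hij, s t.c⟩ with ht'
  refine ⟨fromBlocks t'.toMatrix 0 0 t'.inv.toMatrixᵀ,
    levi_mem t'.mul_inv t'.inv_mul, ?_⟩
  rw [Matrix.fromBlocks_map, map_zero' f]
  have h1 : t'.toMatrix.map f = t.toMatrix := by
    rw [ht', Matrix.TransvectionStruct.toMatrix_mk, Matrix.TransvectionStruct.toMatrix,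
      map_transvection, Function.surjInv_eq hf]
  have h2 : (t'.inv.toMatrixᵀ).map f = t.inv.toMatrixᵀ := by
    have : t'.inv.toMatrix.map f = t.inv.toMatrix := by
      rw [ht', Matrix.TransvectionStruct.inv, Matrix.TransvectionStruct.toMatrix,
        Matrix.TransvectionStruct.toMatrix, map_transvection]
      simp [hs, Function.surjInv_eq hf]
    rw [Matrix.transpose_map, this]
  rw [h1, h2]

end Lift

section Field

variable {R k : Type*} [CommRing R] [Field k] (f : R →+* k) (hf : Function.Surjective f)

include hf in
lemma liftable_levi_diagonal {d : l → k} (hd : ∀ i, d i ≠ 0) :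
    Liftable f (fromBlocks (diagonal d) 0 0 (diagonal fun i => (d i)⁻¹)) := by
  set D : Matrix l l k := diagonal d with hD
  set D' : Matrix l l k := diagonal (fun i => (d i)⁻¹) with hD'
  have hDD' : D * D' = 1 := by
    rw [hD, hD', diagonal_mul_diagonal, ← Matrix.diagonal_one]
    exact congrArg _ (funext fun i => mul_inv_cancel₀ (hd i))
  have hD'D : D' * D = 1 := by
    rw [hD, hD', diagonal_mul_diagonal, ← Matrix.diagonal_one]
    exact congrArg _ (funext fun i => inv_mul_cancel₀ (hd i))
  have key : fromBlocks D 0 0 D' =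
      fromBlocks 1 D 0 1 * fromBlocks 1 0 (-D') 1 * fromBlocks 1 D 0 1 * Matrix.J l k := by
    rw [Matrix.J, fromBlocks_multiply, fromBlocks_multiply, fromBlocks_multiply]
    simp only [Matrix.one_mul, Matrix.mul_one, Matrix.mul_zero, Matrix.zero_mul, add_zero,
      zero_add, Matrix.mul_neg, Matrix.neg_mul]
    rw [hDD', hD'D]
    congr 1 <;> simp [Matrix.mul_assoc]
  have h1 : Liftable f (fromBlocks 1 D 0 1) := liftable_u f hf (by rw [hD, diagonal_transpose])
  have h2 : Liftable f (fromBlocks 1 0 (-D') 1) :=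
    liftable_uL f hf (by rw [transpose_neg, hD', diagonal_transpose])
  have h3 : Liftable f (Matrix.J l k) := liftable_J f hf
  rw [key]
  exact ((h1.mul f h2).mul f h1).mul f h3

include hf in
lemma liftable_levi {M : Matrix l l k} (hM : M.det ≠ 0) :
    Liftable f (fromBlocks M 0 0 (M⁻¹ᵀ)) := by
  refine Matrix.diagonal_transvection_induction_of_det_ne_zero
    (fun N => Liftable f (fromBlocks N 0 0 (N⁻¹ᵀ))) M hM ?_ ?_ ?_
  · intro d hd
    have hd' : ∀ i, d i ≠ 0 := by
      rw [Matrix.det_diagonal] at hd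
      intro i
      exact Finset.prod_ne_zero_iff.mp hd i (Finset.mem_univ i)
    have hinv : (diagonal d)⁻¹ = diagonal fun i => (d i)⁻¹ := by
      refine Matrix.inv_eq_right_inv ?_
      rw [diagonal_mul_diagonal, ← Matrix.diagonal_one]
      exact congrArg _ (funext fun i => mul_inv_cancel₀ (hd' i))
    rw [hinv, diagonal_transpose]
    exact liftable_levi_diagonal f hf hd'
  · intro t
    have hinv : t.toMatrix⁻¹ = t.inv.toMatrix := Matrix.inv_eq_right_inv t.mul_inv
    rw [hinv]
    exact liftable_levi_transvection f hf t
  · intro A B hA hB pA pB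
    have key : fromBlocks (A * B) 0 0 ((A * B)⁻¹ᵀ) =
        fromBlocks A 0 0 (A⁻¹ᵀ) * fromBlocks B 0 0 (B⁻¹ᵀ) := by
      rw [fromBlocks_multiply, Matrix.mul_inv_rev, transpose_mul]
      simp
    rw [key]
    exact pA.mul f pB


lemma exists_symm_diag (d : l → k) (B : Matrix l l k)
    (hsym : diagonal d * Bᵀ = B * diagonal d)
    (hrk : ∀ x : l → k, x ᵥ* diagonal d = 0 → x ᵥ* B = 0 → x = 0) :
    ∃ T : Matrix l l k, Tᵀ = T ∧ (diagonal d + B * T).det ≠ 0 := by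
  classical
  set e : l → k := fun i => if d i = 0 then 1 else 0 with he
  refine ⟨diagonal e, diagonal_transpose e, ?_⟩
  have hentry : ∀ i j, d i * B j i = B i j * d j := by
    intro i j
    have h1 := congrFun (congrFun hsym i) j
    simpa [Matrix.diagonal_mul, Matrix.mul_diagonal, Matrix.transpose_apply] using h1
  intro hdet
  obtain ⟨x, hx0, hxM⟩ := Matrix.exists_vecMul_eq_zero_iff.mpr hdet
  have hxM' : ∀ j, x j * d j + (x ᵥ* B) j * e j = 0 := by
    intro j
    have := congrFun hxM j
    rwa [Matrix.vecMul_add, ← Matrix.vecMul_vecMul, Pi.add_apply, Matrix.vecMul_diagonal,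
      Matrix.vecMul_diagonal] at this
  have hx_ne : ∀ j, d j ≠ 0 → x j = 0 := by
    intro j hj
    have := hxM' j
    rw [he] at this
    simp only [if_neg hj, mul_zero, add_zero, mul_eq_zero] at this
    exact this.resolve_right hj
  have h2 : x ᵥ* diagonal d = 0 := by
    funext j
    show (x ᵥ* diagonal d) j = (0 : k)
    rw [Matrix.vecMul_diagonal]
    by_cases hj : d j = 0
    · rw [hj, mul_zero]
    · rw [hx_ne j hj, zero_mul]
  have h3 : x ᵥ* B = 0 := by
    funext j
    show (x ᵥ* B) j = (0 : k)
    by_cases hj : d j = 0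
    · have h4 := hxM' j
      rw [hj, mul_zero, zero_add, he] at h4
      simp only [if_pos hj, mul_one] at h4
      exact h4
    · rw [Matrix.vecMul, dotProduct]
      apply Finset.sum_eq_zero
      intro i _
      by_cases hi : d i = 0
      · have hBij : B i j = 0 := by
          have h5 := hentry i j
          rw [hi, zero_mul] at h5
          exact (mul_eq_zero.mp h5.symm).resolve_right hj
        rw [hBij, mul_zero]
      · rw [hx_ne i hi, zero_mul]
  exact hx0 (hrk x h2 h3)


lemma exists_symm_T {A B : Matrix l l k} (hsym : B * Aᵀ = A * Bᵀ)
    (hrk : ∀ x : l → k, x ᵥ* A = 0 → x ᵥ* B = 0 → x = 0) :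
    ∃ T : Matrix l l k, Tᵀ = T ∧ (A + B * T).det ≠ 0 := by
  obtain ⟨L, L', d, h⟩ := Matrix.Pivot.exists_list_transvec_mul_mul_list_transvec_eq_diagonal A
  set P := (L.map Matrix.TransvectionStruct.toMatrix).prod with hP
  set Q := (L'.map Matrix.TransvectionStruct.toMatrix).prod with hQ
  have hPdet : IsUnit P.det := by
    rw [hP, Matrix.TransvectionStruct.det_toMatrix_prod]; exact isUnit_one
  have hQdet : IsUnit Q.det := by
    rw [hQ, Matrix.TransvectionStruct.det_toMatrix_prod]; exact isUnit_one
  have hPP : P * P⁻¹ = 1 := Matrix.mul_nonsing_inv P hPdet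
  have hQQ : Q * Q⁻¹ = 1 := Matrix.mul_nonsing_inv Q hQdet
  have hQ'Q : Q⁻¹ * Q = 1 := Matrix.nonsing_inv_mul Q hQdet
  have hQQt : Q⁻¹ᵀ * Qᵀ = 1 := by rw [← transpose_mul, hQQ, transpose_one]
  have hQtQ : Qᵀ * Q⁻¹ᵀ = 1 := by rw [← transpose_mul, hQ'Q, transpose_one]
  set B' := P * B * Q⁻¹ᵀ with hB'
  have hsym' : diagonal d * B'ᵀ = B' * diagonal d := by
    rw [hB']
    conv_lhs => rw [← h]
    conv_rhs => rw [← diagonal_transpose d, ← h]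
    calc P * A * Q * (P * B * Q⁻¹ᵀ)ᵀ = P * A * (Q * Q⁻¹) * Bᵀ * Pᵀ := by
          simp only [transpose_mul, transpose_transpose, Matrix.mul_assoc]
      _ = P * (A * Bᵀ) * Pᵀ := by rw [hQQ]; simp only [Matrix.mul_assoc, Matrix.mul_one]
      _ = P * (B * Aᵀ) * Pᵀ := by rw [hsym]
      _ = P * B * (Q⁻¹ᵀ * Qᵀ) * Aᵀ * Pᵀ := by
          rw [hQQt]; simp only [Matrix.mul_assoc, Matrix.one_mul]
      _ = P * B * Q⁻¹ᵀ * (P * A * Q)ᵀ := by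
          simp only [transpose_mul, Matrix.mul_assoc]
  have hrk' : ∀ x : l → k, x ᵥ* diagonal d = 0 → x ᵥ* B' = 0 → x = 0 := by
    intro x h1 h2
    rw [← h] at h1
    have hA1 : (x ᵥ* P) ᵥ* A = 0 := by
      refine vecMul_cancel hQQ ?_
      rw [← Matrix.vecMul_vecMul, ← Matrix.vecMul_vecMul] at h1
      exact h1
    have hB1 : (x ᵥ* P) ᵥ* B = 0 := by
      refine vecMul_cancel hQQt ?_
      rw [hB', ← Matrix.vecMul_vecMul, ← Matrix.vecMul_vecMul] at h2
      exact h2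
    have := hrk _ hA1 hB1
    exact vecMul_cancel hPP this
  obtain ⟨T', hT', hdet'⟩ := exists_symm_diag d B' hsym' hrk'
  refine ⟨Q⁻¹ᵀ * T' * Q⁻¹, ?_, ?_⟩
  · simp only [transpose_mul, transpose_transpose, hT', Matrix.transpose_nonsing_inv,
      Matrix.mul_assoc]
  · have hkey : P * (A + B * (Q⁻¹ᵀ * T' * Q⁻¹)) * Q = diagonal d + B' * T' := by
      rw [Matrix.mul_add, Matrix.add_mul, h, hB']
      congr 1
      calc P * (B * (Q⁻¹ᵀ * T' * Q⁻¹)) * Q = P * B * Q⁻¹ᵀ * T' * (Q⁻¹ * Q) := by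
            simp only [Matrix.mul_assoc]
        _ = P * B * Q⁻¹ᵀ * T' := by rw [hQ'Q, Matrix.mul_one]
    intro hc
    apply hdet'
    rw [← hkey, Matrix.det_mul, Matrix.det_mul, hc, mul_zero, zero_mul]


include hf in
lemma liftable_blocks (A B C D : Matrix l l k)
    (hg : fromBlocks A B C D ∈ Matrix.symplecticGroup l k) :
    Liftable f (fromBlocks A B C D) := by
  have hdet := SymplecticGroup.symplectic_det hg
  obtain ⟨r1, _r2, _r3, _r4⟩ := mem_iff_blocks.mp hg
  have hrk : ∀ x : l → k, x ᵥ* A = 0 → x ᵥ* B = 0 → x = 0 := by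
    intro x hA hB
    have hginv : fromBlocks A B C D * (fromBlocks A B C D)⁻¹ = 1 :=
      Matrix.mul_nonsing_inv _ hdet
    have hy : (Sum.elim x 0) ᵥ* fromBlocks A B C D = 0 := by
      funext j
      cases j with
      | inl j =>
        have hAj := congrFun hA j
        simp only [Matrix.vecMul, dotProduct, Pi.zero_apply] at hAj ⊢
        rw [Fintype.sum_sum_type]
        simpa using hAj
      | inr j =>
        have hBj := congrFun hB j
        simp only [Matrix.vecMul, dotProduct, Pi.zero_apply] at hBj ⊢
        rw [Fintype.sum_sum_type]
        simpa using hBj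
    have h0 := vecMul_cancel hginv hy
    funext i
    exact congrFun h0 (Sum.inl i)
  obtain ⟨T, hT, hdet2⟩ := exists_symm_T r1 hrk
  set A₂ := A + B * T with hA₂def
  set C₂ := C + D * T with hC₂def
  have hg₂eq : fromBlocks A B C D * fromBlocks 1 0 T 1 = fromBlocks A₂ B C₂ D := by
    rw [fromBlocks_multiply]
    simp [hA₂def, hC₂def]
  have hg₂mem : fromBlocks A₂ B C₂ D ∈ Matrix.symplecticGroup l k := by
    rw [← hg₂eq]; exact mul_mem hg (uL_mem hT)
  have hA₂u : IsUnit A₂.det := isUnit_iff_ne_zero.mpr hdet2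
  have hA₂Tu : IsUnit (A₂ᵀ).det := by rwa [Matrix.det_transpose]
  have hAA : A₂ * A₂⁻¹ = 1 := Matrix.mul_nonsing_inv _ hA₂u
  have hA'A : A₂⁻¹ * A₂ = 1 := Matrix.nonsing_inv_mul _ hA₂u
  have hATinv : A₂⁻¹ᵀ = A₂ᵀ⁻¹ := Matrix.transpose_nonsing_inv _
  have hAT'A : A₂ᵀ⁻¹ * A₂ᵀ = 1 := Matrix.nonsing_inv_mul _ hA₂Tu
  obtain ⟨t1, _t2, _t3, _t4⟩ := mem_iff_blocks.mp hg₂mem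
  have hg₂T : fromBlocks A₂ᵀ C₂ᵀ Bᵀ Dᵀ ∈ Matrix.symplecticGroup l k := by
    rw [← fromBlocks_transpose]; exact SymplecticGroup.transpose_mem hg₂mem
  obtain ⟨u1, u2, _u3, _u4⟩ := mem_iff_blocks.mp hg₂T
  simp only [transpose_transpose] at u1 u2
  set X := C₂ * A₂⁻¹ with hXdef
  set Y := A₂⁻¹ * B with hYdef
  have hATA' : A₂ᵀ * A₂ᵀ⁻¹ = 1 := Matrix.mul_nonsing_inv _ hA₂Tu
  have hX : X = A₂ᵀ⁻¹ * C₂ᵀ := by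
    have e1 : A₂ᵀ⁻¹ * (C₂ᵀ * A₂) * A₂⁻¹ = A₂ᵀ⁻¹ * (A₂ᵀ * C₂) * A₂⁻¹ := by rw [u1]
    simp only [Matrix.mul_assoc] at e1
    rw [hAA, Matrix.mul_one, ← Matrix.mul_assoc A₂ᵀ⁻¹ A₂ᵀ (C₂ * A₂⁻¹), hAT'A,
      Matrix.one_mul] at e1
    rw [hXdef]
    exact e1.symm
  have hXsym : Xᵀ = X := by
    rw [hXdef, transpose_mul, hATinv, ← hX]
  have hY : Y = Bᵀ * A₂ᵀ⁻¹ := by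
    have e2 : A₂⁻¹ * (B * A₂ᵀ) * A₂ᵀ⁻¹ = A₂⁻¹ * (A₂ * Bᵀ) * A₂ᵀ⁻¹ := by rw [t1]
    simp only [Matrix.mul_assoc] at e2
    rw [hATA', Matrix.mul_one, ← Matrix.mul_assoc A₂⁻¹ A₂ (Bᵀ * A₂ᵀ⁻¹), hA'A,
      Matrix.one_mul] at e2
    rw [hYdef]
    exact e2
  have hYsym : Yᵀ = Y := by
    rw [hYdef, transpose_mul, hATinv, ← hY]
  have hBY : A₂ * Y = B := by rw [hYdef, ← Matrix.mul_assoc, hAA, Matrix.one_mul]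
  have hXA : X * A₂ = C₂ := by rw [hXdef, Matrix.mul_assoc, hA'A, Matrix.mul_one]
  have hD : D = X * A₂ * Y + A₂⁻¹ᵀ := by
    have hDeq : A₂ᵀ * D = 1 + C₂ᵀ * B := by
      rw [← u2]
      rw [sub_add_cancel]
    have hD2 : D = A₂ᵀ⁻¹ * (1 + C₂ᵀ * B) := by
      rw [← hDeq, ← Matrix.mul_assoc, hAT'A, Matrix.one_mul]
    rw [hD2, Matrix.mul_add, Matrix.mul_one, hATinv, add_comm]
    congr 1
    rw [Matrix.mul_assoc, hBY, ← Matrix.mul_assoc, ← hX]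
  have hdec : fromBlocks 1 0 X 1 * fromBlocks A₂ 0 0 (A₂⁻¹ᵀ) * fromBlocks 1 Y 0 1 =
      fromBlocks A₂ B C₂ D := by
    rw [fromBlocks_multiply, fromBlocks_multiply]
    simp only [Matrix.one_mul, Matrix.mul_one, Matrix.mul_zero, Matrix.zero_mul, add_zero,
      zero_add]
    rw [fromBlocks_inj]
    exact ⟨rfl, hBY, hXA, hD.symm⟩
  have hfinal : fromBlocks A B C D =
      fromBlocks 1 0 X 1 * fromBlocks A₂ 0 0 (A₂⁻¹ᵀ) * fromBlocks 1 Y 0 1 *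
        fromBlocks 1 0 (-T) 1 := by
    rw [hdec, ← hg₂eq, Matrix.mul_assoc, fromBlocks_multiply]
    simp
  rw [hfinal]
  have lX := liftable_uL f hf hXsym
  have lL := liftable_levi f hf hdet2
  have lY := liftable_u f hf hYsym
  have lT := liftable_uL f hf (show (-T)ᵀ = -T by rw [transpose_neg, hT])
  exact ((lX.mul f lL).mul f lY).mul f lT

end Field
end SympLift

/-- If `R` is a PID and `J ⊆ R` is an ideal with `R/J` a field
(i.e. `J` is maximal), then the reduction map `Sp_{2n}(R) → Sp_{2n}(R/J)` is surjective:
every symplectic matrix over `R/J` lifts to a symplectic matrix over `R`. -/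
theorem symplecticGroup_reduction_surjective
    (R : Type*) [CommRing R] [IsDomain R] [IsPrincipalIdealRing R]
    (J : Ideal R) (hJ : J.IsMaximal) (n : ℕ) :
    ∀ B ∈ Matrix.symplecticGroup (Fin n) (R ⧸ J),
      ∃ A ∈ Matrix.symplecticGroup (Fin n) R,
        A.map (Ideal.Quotient.mk J) = B := by
  haveI := hJ
  letI : Field (R ⧸ J) := Ideal.Quotient.field J
  intro B hB
  have key := SympLift.liftable_blocks (Ideal.Quotient.mk J) Ideal.Quotient.mk_surjective
    B.toBlocks₁₁ B.toBlocks₁₂ B.toBlocks₂₁ B.toBlocks₂₂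
    (by rw [Matrix.fromBlocks_toBlocks]; exact hB)
  rw [Matrix.fromBlocks_toBlocks] at key
  exact key
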